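/- Every bounded set X in n-dimensional Euclidean space ℝ^n with d(X) > 0 can be written as a union of 2^{n−1} + 1 subsets, each of diameter strictly smaller than d(X); that is, b(X) ≤ 2^{n−1} + 1. -/

import Mathlib

open Metric Set
open scoped RealInnerProductSpace

set_option maxHeartbeats 1000000 in
noncomputable section

namespace BorsukLassakAux

variable {n : ℕ}

local notation "Epc" => EuclideanSpace ℝ (Fin n)

/-- Existence of a minimal enclosing ball (center, radius, witness point on sphere,
minimality). -/
theorem exists_minBall (K : Set Epc) (hK : IsCompact K) (hne : K.Nonempty) :
    ∃ c r, (∀ x ∈ K, dist x c ≤ r) ∧ (∃ p ∈ K, dist p c = r) ∧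
      (∀ c' R, (∀ x ∈ K, dist x c' ≤ R) → r ≤ R) := by
  classical
  set F : Epc → ℝ := fun c => sSup ((fun x => dist x c) '' K) with hF
  have himg : ∀ c : Epc, ((fun x => dist x c) '' K).Nonempty := fun c => hne.image _
  have hbdd : ∀ c : Epc, BddAbove ((fun x => dist x c) '' K) := fun c =>
    (hK.image (continuous_id.dist continuous_const)).bddAbove
  have hle : ∀ c : Epc, ∀ x ∈ K, dist x c ≤ F c := fun c x hx => le_csSup (hbdd c) ⟨x, hx, rfl⟩
  have hsup_le : ∀ c R, (∀ x ∈ K, dist x c ≤ R) → F c ≤ R := fun c R h =>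
    csSup_le (himg c) (by rintro y ⟨x, hx, rfl⟩; exact h x hx)
  have hlip : ∀ c c' : Epc, F c ≤ F c' + dist c c' := by
    intro c c'
    refine hsup_le c _ fun x hx => ?_
    calc dist x c ≤ dist x c' + dist c' c := dist_triangle _ _ _
    _ ≤ F c' + dist c c' := by
        rw [dist_comm c' c]; exact add_le_add_left (hle c' x hx) _
  have hcont : Continuous F := by
    have : LipschitzWith 1 F := LipschitzWith.of_le_add fun x y => hlip x y
    exact this.continuous
  obtain ⟨x₀, hx₀⟩ := hne
  have hFx₀ : (0:ℝ) ≤ F x₀ := le_trans dist_nonneg (hle x₀ x₀ hx₀)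
  obtain ⟨c, hcball, hcmin⟩ :=
    (isCompact_closedBall x₀ (F x₀)).exists_isMinOn
      ⟨x₀, by simpa [mem_closedBall] using hFx₀⟩ hcont.continuousOn
  have hglobal : ∀ c' : Epc, F c ≤ F c' := by
    intro c'
    by_cases hc' : c' ∈ closedBall x₀ (F x₀)
    · exact hcmin hc'
    · have h1 : F x₀ < dist x₀ c' := by
        rw [mem_closedBall, dist_comm] at hc'
        linarith [not_le.mp hc']
      have h2 : dist x₀ c' ≤ F c' := hle c' x₀ hx₀
      have h3 : F c ≤ F x₀ := hcmin (by simpa [mem_closedBall] using hFx₀)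
      linarith
  obtain ⟨p, hpK, hpmax⟩ := hK.exists_isMaxOn ⟨x₀, hx₀⟩
    ((continuous_id.dist continuous_const).continuousOn : ContinuousOn (fun x => dist x c) K)
  have hpc : dist p c = F c := by
    refine le_antisymm (hle c p hpK) (hsup_le c _ fun x hx => hpmax hx)
  exact ⟨c, F c, hle c, ⟨p, hpK, hpc⟩, fun c' R h => le_trans (hglobal c') (hsup_le c' R h)⟩

/-- Jung-type strict estimate for the minimal enclosing ball radius:
`2 r² < D²` when the set has diameter at most `D > 0`. -/
theorem two_radius_sq_lt (K : Set Epc) (hK : IsCompact K) (c : Epc) (r D : ℝ)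
    (hrball : ∀ x ∈ K, dist x c ≤ r) (hp : ∃ p ∈ K, dist p c = r)
    (hmin : ∀ c' R, (∀ x ∈ K, dist x c' ≤ R) → r ≤ R)
    (hdist : ∀ x ∈ K, ∀ y ∈ K, dist x y ≤ D) (hD : 0 < D) (hr0 : 0 < r) :
    2 * r ^ 2 < D ^ 2 := by
  classical
  obtain ⟨p, hpK, hpc⟩ := hp
  set T : Set Epc := {x | x ∈ K ∧ dist x c = r} with hT
  have hTK : T ⊆ K := fun x hx => hx.1
  have hTc : IsCompact T := by
    have : T = K ∩ (fun x => dist x c) ⁻¹' {r} := by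
      ext x; simp [hT, Set.mem_inter_iff]
    rw [this]
    exact hK.inter_right ((isClosed_singleton).preimage (continuous_id.dist continuous_const))
  have hTne : p ∈ T := ⟨hpK, hpc⟩
  -- the center is in the closure of the convex hull of the contact set
  have hc : c ∈ closure (convexHull ℝ T) := by
    by_contra hcc
    obtain ⟨f, u, hfc, hfT⟩ :=
      geometric_hahn_banach_point_closed ((convex_convexHull ℝ T).closure) isClosed_closure hcc
    set v : Epc := (InnerProductSpace.toDual ℝ Epc).symm f with hv
    have hfv : ∀ w : Epc, ⟪v, w⟫ = f w := fun w => InnerProductSpace.toDual_symm_apply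
    set ε : ℝ := u - f c with hε
    have hε0 : 0 < ε := by simp [hε]; linarith
    have hvT : ∀ x ∈ T, ε ≤ ⟪v, x - c⟫ := by
      intro x hx
      have : u < f x := hfT x (subset_closure (subset_convexHull ℝ T hx))
      have hfx : ⟪v, x - c⟫ = f x - f c := by rw [hfv]; simp
      rw [hfx]; linarith
    -- the set of points with small inner product stays strictly inside the ball
    set S : Set Epc := {x | x ∈ K ∧ ⟪v, x - c⟫ ≤ ε / 2} with hS
    have hScomp : IsCompact S := by
      have : S = K ∩ (fun x => ⟪v, x - c⟫) ⁻¹' (Iic (ε / 2)) := by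
        ext x; simp [hS]
      rw [this]
      exact hK.inter_right (isClosed_Iic.preimage
        (Continuous.inner continuous_const (continuous_id.sub continuous_const)))
    obtain ⟨rq, hrq0, hrqr, hrqS⟩ : ∃ rq, 0 ≤ rq ∧ rq < r ∧ ∀ x ∈ S, dist x c ≤ rq := by
      rcases S.eq_empty_or_nonempty with hSe | hSne
      · exact ⟨0, le_refl _, hr0, by simp [hSe]⟩
      · obtain ⟨q, hqS, hqmax⟩ := hScomp.exists_isMaxOn hSne
          ((continuous_id.dist continuous_const).continuousOn)
        refine ⟨dist q c, dist_nonneg, ?_, fun x hx => hqmax hx⟩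
        rcases lt_or_eq_of_le (hrball q hqS.1) with h | h
        · exact h
        · exfalso
          have : q ∈ T := ⟨hqS.1, h⟩
          have := hvT q this
          have := hqS.2
          linarith
    have hvne : v ≠ 0 := by
      intro h0
      have := hvT p hTne
      rw [h0] at this
      simp at this
      linarith
    have hvpos : 0 < ‖v‖ := norm_pos_iff.mpr hvne
    obtain ⟨t, ht0, htA, htB⟩ : ∃ t : ℝ, 0 < t ∧ t * ‖v‖ < r - rq ∧ t * ‖v‖ ^ 2 ≤ ε / 2 := by
      refine ⟨min ((r - rq) / (2 * ‖v‖)) (ε / (2 * ‖v‖ ^ 2)), ?_, ?_, ?_⟩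
      · exact lt_min (div_pos (by linarith) (by positivity)) (div_pos hε0 (by positivity))
      · have h1 : min ((r - rq) / (2 * ‖v‖)) (ε / (2 * ‖v‖ ^ 2)) ≤ (r - rq) / (2 * ‖v‖) :=
          min_le_left _ _
        have h2 : (r - rq) / (2 * ‖v‖) * ‖v‖ = (r - rq) / 2 := by
          field_simp
        have h3 : min ((r - rq) / (2 * ‖v‖)) (ε / (2 * ‖v‖ ^ 2)) * ‖v‖ ≤ (r - rq) / 2 := by
          rw [← h2]; exact mul_le_mul_of_nonneg_right h1 (le_of_lt hvpos)
        linarith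
      · have h1 : min ((r - rq) / (2 * ‖v‖)) (ε / (2 * ‖v‖ ^ 2)) ≤ ε / (2 * ‖v‖ ^ 2) :=
          min_le_right _ _
        have h2 : ε / (2 * ‖v‖ ^ 2) * ‖v‖ ^ 2 = ε / 2 := by
          field_simp
        calc min ((r - rq) / (2 * ‖v‖)) (ε / (2 * ‖v‖ ^ 2)) * ‖v‖ ^ 2
            ≤ ε / (2 * ‖v‖ ^ 2) * ‖v‖ ^ 2 := mul_le_mul_of_nonneg_right h1 (by positivity)
        _ = ε / 2 := h2
    -- every point of K is at distance < r from c + t • v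
    have hlt : ∀ x ∈ K, dist x (c + t • v) < r := by
      intro x hx
      by_cases hxS : x ∈ S
      · have h1 : dist x (c + t • v) ≤ dist x c + dist c (c + t • v) := dist_triangle _ _ _
        have h2 : dist c (c + t • v) = t * ‖v‖ := by
          rw [dist_comm]
          simp [dist_eq_norm, norm_smul, abs_of_pos ht0]
        have h4 : dist x c ≤ rq := hrqS x hxS
        rw [h2] at h1
        linarith
      · have hxK : ⟪v, x - c⟫ > ε / 2 := by
          by_contra hcon
          exact hxS ⟨hx, le_of_not_gt hcon⟩
        have hnorm : ‖x - (c + t • v)‖ ^ 2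
            = ‖x - c‖ ^ 2 - 2 * t * ⟪v, x - c⟫ + t ^ 2 * ‖v‖ ^ 2 := by
          have hxc : x - (c + t • v) = (x - c) - t • v := by abel
          rw [hxc, norm_sub_sq_real, real_inner_smul_right, norm_smul, real_inner_comm]
          simp [abs_of_pos ht0]
          ring
        have hxcr : ‖x - c‖ ≤ r := by
          rw [← dist_eq_norm]; exact hrball x hx
        have hsq : ‖x - (c + t • v)‖ ^ 2 < r ^ 2 := by
          rw [hnorm]
          have h5 : ‖x - c‖ ^ 2 ≤ r ^ 2 := by
            nlinarith [norm_nonneg (x - c)]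
          nlinarith [mul_lt_mul_of_pos_left hxK ht0]
        have h9 : ‖x - (c + t • v)‖ < r := by
          nlinarith [norm_nonneg (x - (c + t • v))]
        rw [dist_eq_norm]; exact h9
    -- contradiction with minimality
    obtain ⟨m, hmK, hmmax⟩ := hK.exists_isMaxOn ⟨p, hpK⟩
      ((continuous_id.dist continuous_const).continuousOn :
        ContinuousOn (fun x => dist x (c + t • v)) K)
    have hRm : ∀ x ∈ K, dist x (c + t • v) ≤ dist m (c + t • v) := fun x hx => hmmax hx
    have := hmin (c + t • v) (dist m (c + t • v)) hRm
    have := hlt m hmK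
    linarith
  -- now extract a quantitative estimate via Carathéodory
  have key : ∀ ε : ℝ, 0 < ε → 2 * r ^ 2 ≤ 2 * (1 - 1 / (n + 1)) * (D ^ 2 / 2) + ε := by
    intro ε hε0
    obtain ⟨y, hyhull, hyc⟩ : ∃ y ∈ convexHull ℝ T, dist c y < Real.sqrt (ε / 2) := by
      have := Metric.mem_closure_iff.mp hc (Real.sqrt (ε / 2))
        (Real.sqrt_pos.mpr (half_pos hε0))
      obtain ⟨y, hy1, hy2⟩ := this
      exact ⟨y, hy1, hy2⟩
    obtain ⟨ι, hι, z, w, hzT, haff, hw0, hw1, hwz⟩ :=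
      eq_pos_convex_span_of_mem_convexHull hyhull
    -- card bound
    have hcard : (Fintype.card ι : ℝ) ≤ (n : ℝ) + 1 := by
      have h1 : Fintype.card ι ≤ Module.finrank ℝ (vectorSpan ℝ (Set.range z)) + 1 :=
        haff.card_le_finrank_succ
      have h2 : Module.finrank ℝ (vectorSpan ℝ (Set.range z)) ≤ Module.finrank ℝ Epc :=
        Submodule.finrank_le _
      have h3 : Module.finrank ℝ Epc = n := finrank_euclideanSpace_fin
      have : Fintype.card ι ≤ n + 1 := by omega
      exact_mod_cast this
    have hcard0 : 0 < Fintype.card ι := by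
      rcases Nat.eq_zero_or_pos (Fintype.card ι) with h0 | h0
      · exfalso
        haveI : IsEmpty ι := Fintype.card_eq_zero_iff.mp h0
        rw [Finset.univ_eq_empty, Finset.sum_empty] at hw1
        norm_num at hw1
      · exact h0
    set vv : ι → Epc := fun i => z i - c with hvv
    have hvnorm : ∀ i, ‖vv i‖ = r := by
      intro i
      have hzi : z i ∈ T := hzT ⟨i, rfl⟩
      have := hzi.2
      rw [hvv]
      simpa [dist_eq_norm] using this
    have hvdiag : ∀ i, ⟪vv i, vv i⟫ = r ^ 2 := by
      intro i
      rw [real_inner_self_eq_norm_sq, hvnorm]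
    have hvoff : ∀ i j, ⟪vv i, vv j⟫ ≥ r ^ 2 - D ^ 2 / 2 := by
      intro i j
      rcases eq_or_ne i j with rfl | hij
      · rw [hvdiag]
        nlinarith [sq_nonneg D]
      · have hzi : z i ∈ T := hzT ⟨i, rfl⟩
        have hzj : z j ∈ T := hzT ⟨j, rfl⟩
        have hdij : dist (z i) (z j) ≤ D := hdist _ hzi.1 _ hzj.1
        have hsub : vv i - vv j = z i - z j := by
          show (z i - c) - (z j - c) = z i - z j
          abel
        have hnij : ‖vv i - vv j‖ ^ 2 ≤ D ^ 2 := by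
          rw [hsub, ← dist_eq_norm]
          nlinarith [dist_nonneg (x := z i) (y := z j)]
        have hexp : ‖vv i - vv j‖ ^ 2
            = ‖vv i‖ ^ 2 - 2 * ⟪vv i, vv j⟫ + ‖vv j‖ ^ 2 := norm_sub_sq_real _ _
        rw [hvnorm, hvnorm] at hexp
        linarith
    have hyc2 : y - c = ∑ i, w i • vv i := by
      rw [hvv]
      simp only [smul_sub]
      rw [Finset.sum_sub_distrib, ← Finset.sum_smul, hw1, hwz, one_smul]
    have hexpand : ‖y - c‖ ^ 2 = ∑ i, ∑ j, w i * w j * ⟪vv i, vv j⟫ := by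
      rw [← real_inner_self_eq_norm_sq, hyc2, sum_inner]
      refine Finset.sum_congr rfl fun i _ => ?_
      rw [inner_sum]
      refine Finset.sum_congr rfl fun j _ => ?_
      rw [real_inner_smul_left, real_inner_smul_right]
      ring
    have hAterm : ∀ i j, w i * w j * ⟪vv i, vv j⟫
        ≥ w i * w j * (r ^ 2 - D ^ 2 / 2) + (if i = j then w i ^ 2 * (D ^ 2 / 2) else 0) := by
      intro i j
      rcases eq_or_ne i j with rfl | hij
      · rw [if_pos rfl, hvdiag]
        have heqq : w i * w i * (r ^ 2 - D ^ 2 / 2) + w i ^ 2 * (D ^ 2 / 2)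
            = w i * w i * r ^ 2 := by ring
        rw [heqq]
      · simp only [if_neg hij, add_zero]
        have hwij : 0 ≤ w i * w j := mul_nonneg (le_of_lt (hw0 i)) (le_of_lt (hw0 j))
        exact mul_le_mul_of_nonneg_left (hvoff i j) hwij
    have hlower : ‖y - c‖ ^ 2
        ≥ (r ^ 2 - D ^ 2 / 2) + (D ^ 2 / 2) * ∑ i, w i ^ 2 := by
      rw [hexpand]
      have hstep : ∑ i, ∑ j, w i * w j * ⟪vv i, vv j⟫
          ≥ ∑ i, ∑ j, (w i * w j * (r ^ 2 - D ^ 2 / 2)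
            + (if i = j then w i ^ 2 * (D ^ 2 / 2) else 0)) := by
        refine Finset.sum_le_sum fun i _ => Finset.sum_le_sum fun j _ => hAterm i j
      have hcalc : ∑ i, ∑ j, (w i * w j * (r ^ 2 - D ^ 2 / 2)
            + (if i = j then w i ^ 2 * (D ^ 2 / 2) else 0))
          = (r ^ 2 - D ^ 2 / 2) + (D ^ 2 / 2) * ∑ i, w i ^ 2 := by
        have h1 : ∀ i, ∑ j, (w i * w j * (r ^ 2 - D ^ 2 / 2)
              + (if i = j then w i ^ 2 * (D ^ 2 / 2) else 0))
            = w i * (r ^ 2 - D ^ 2 / 2) + w i ^ 2 * (D ^ 2 / 2) := by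
          intro i
          rw [Finset.sum_add_distrib]
          congr 1
          · have : ∀ j, w i * w j * (r ^ 2 - D ^ 2 / 2)
                = (w i * (r ^ 2 - D ^ 2 / 2)) * w j := fun j => by ring
            rw [Finset.sum_congr rfl fun j _ => this j, ← Finset.mul_sum, hw1, mul_one]
          · simp
        rw [Finset.sum_congr rfl fun i _ => h1 i, Finset.sum_add_distrib]
        rw [← Finset.sum_mul, hw1, one_mul, ← Finset.sum_mul]
        ring
      linarith [hstep, hcalc.symm.le, hcalc.le]
    -- lower bound on the weight square sum
    have hA : ∑ i, w i ^ 2 ≥ 1 / ((n : ℝ) + 1) := by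
      have hchev : (∑ i, w i) ^ 2 ≤ (Finset.univ.card : ℝ) * ∑ i, w i ^ 2 :=
        sq_sum_le_card_mul_sum_sq
      rw [hw1, one_pow, Finset.card_univ] at hchev
      have hcpos : (0 : ℝ) < (Fintype.card ι : ℝ) := by exact_mod_cast hcard0
      have hApos : 0 ≤ ∑ i, w i ^ 2 := Finset.sum_nonneg fun i _ => sq_nonneg _
      have h1 : 1 / ((n : ℝ) + 1) ≤ 1 / (Fintype.card ι : ℝ) := by
        apply one_div_le_one_div_of_le hcpos hcard
      have h2 : 1 / (Fintype.card ι : ℝ) ≤ ∑ i, w i ^ 2 := by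
        rw [div_le_iff₀ hcpos]
        linarith [hchev]
      linarith
    have hyceps : ‖y - c‖ ^ 2 < ε / 2 := by
      have h1 : dist c y < Real.sqrt (ε / 2) := hyc
      have h2 : ‖y - c‖ = dist c y := by rw [dist_eq_norm, norm_sub_rev]
      rw [h2]
      have h3 : 0 ≤ dist c y := dist_nonneg
      nlinarith [Real.sq_sqrt (le_of_lt (half_pos hε0)), Real.sqrt_nonneg (ε / 2)]
    have hDpos : 0 < D ^ 2 := pow_pos hD 2
    have hfrac : (0:ℝ) < (n:ℝ) + 1 := by positivity
    have := hlower
    have hfinal : r ^ 2 - D ^ 2 / 2 + D ^ 2 / 2 * (1 / ((n:ℝ) + 1)) < ε / 2 := by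
      have hm : D ^ 2 / 2 * (1 / ((n:ℝ) + 1)) ≤ D ^ 2 / 2 * ∑ i, w i ^ 2 :=
        mul_le_mul_of_nonneg_left hA (by positivity)
      linarith
    have heq : 2 * (1 - 1 / ((n:ℝ) + 1)) * (D ^ 2 / 2)
        = D ^ 2 - D ^ 2 / 2 * (1 / ((n:ℝ)+1)) * 2 := by
      field_simp
    rw [heq]
    linarith
  have hfin : 2 * r ^ 2 ≤ 2 * (1 - 1 / ((n:ℝ) + 1)) * (D ^ 2 / 2) :=
    le_of_forall_pos_le_add key
  have hDpos : 0 < D ^ 2 := pow_pos hD 2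
  have hfrac : (0:ℝ) < (n:ℝ) + 1 := by positivity
  have hlt : 2 * (1 - 1 / ((n:ℝ) + 1)) * (D ^ 2 / 2) < D ^ 2 := by
    have h1 : 0 < D ^ 2 / ((n:ℝ) + 1) := by positivity
    have heq : 2 * (1 - 1 / ((n:ℝ) + 1)) * (D ^ 2 / 2) = D ^ 2 - D ^ 2 / ((n:ℝ) + 1) := by
      field_simp
    rw [heq]
    linarith
  linarith

/-- Parseval-type identity: the square norm decomposes along a unit vector `u` and an
orthonormal basis of its orthogonal complement. -/
theorem parseval_aux (u : Epc) (hu : ‖u‖ = 1)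
    (b : OrthonormalBasis (Fin (n - 1)) ℝ ((ℝ ∙ u)ᗮ : Submodule ℝ Epc)) (w : Epc) :
    ⟪u, w⟫ ^ 2 + ∑ i, ⟪((b i : Epc)), w⟫ ^ 2 = ‖w‖ ^ 2 := by
  classical
  have hp : ‖w‖ ^ 2 = ‖Submodule.orthogonalProjectionOnto (ℝ ∙ u) w‖ ^ 2
      + ‖Submodule.orthogonalProjectionOnto (ℝ ∙ u)ᗮ w‖ ^ 2 :=
    Submodule.norm_sq_eq_add_norm_sq_projection w (ℝ ∙ u)
  have h1 : ‖Submodule.orthogonalProjectionOnto (ℝ ∙ u) w‖ ^ 2 = ⟪u, w⟫ ^ 2 := by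
    have hform : (Submodule.orthogonalProjectionOnto (ℝ ∙ u) w : Epc) = ⟪u, w⟫ • u :=
      Submodule.starProjection_unit_singleton ℝ hu w
    have hnn : ‖Submodule.orthogonalProjectionOnto (ℝ ∙ u) w‖ = ‖(Submodule.orthogonalProjectionOnto (ℝ ∙ u) w : Epc)‖ := rfl
    rw [hnn, hform, norm_smul, hu, mul_one, Real.norm_eq_abs, sq_abs]
  have h2 : ‖Submodule.orthogonalProjectionOnto (ℝ ∙ u)ᗮ w‖ ^ 2 = ∑ i, ⟪((b i : Epc)), w⟫ ^ 2 := by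
    set z : ((ℝ ∙ u)ᗮ : Submodule ℝ Epc) := Submodule.orthogonalProjectionOnto (ℝ ∙ u)ᗮ w with hz
    have hrepr : ∀ i, b.repr z i = ⟪((b i : Epc)), w⟫ := by
      intro i
      rw [b.repr_apply_apply]
      have hco : (⟪b i, z⟫ : ℝ) = ⟪((b i : Epc)), (z : Epc)⟫ := rfl
      rw [hco]
      -- ⟪b i, z⟫ = ⟪b i, w⟫ because w - z ∈ ((ℝ ∙ u)ᗮ)ᗮ
      have hdecomp : (Submodule.orthogonalProjectionOnto (ℝ ∙ u) w : Epc) + (z : Epc) = w :=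
        Submodule.starProjection_add_starProjection_orthogonal (K := ℝ ∙ u) w
      have hmem : (Submodule.orthogonalProjectionOnto (ℝ ∙ u) w : Epc) ∈ (ℝ ∙ u) :=
        (Submodule.orthogonalProjectionOnto (ℝ ∙ u) w).2
      have hbi : ((b i : Epc)) ∈ ((ℝ ∙ u)ᗮ : Submodule ℝ Epc) := (b i).2
      have hzero : ⟪((b i : Epc)), (Submodule.orthogonalProjectionOnto (ℝ ∙ u) w : Epc)⟫ = 0 :=
        Submodule.inner_left_of_mem_orthogonal hmem hbi
      calc ⟪((b i : Epc)), (z : Epc)⟫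
          = ⟪((b i : Epc)), (Submodule.orthogonalProjectionOnto (ℝ ∙ u) w : Epc)⟫
            + ⟪((b i : Epc)), (z : Epc)⟫ := by rw [hzero]; ring
        _ = ⟪((b i : Epc)), w⟫ := by rw [← inner_add_right, hdecomp]
    have hnz : ‖z‖ ^ 2 = ∑ i, (b.repr z i) ^ 2 := by
      have hiso : ‖z‖ = ‖b.repr z‖ := (b.repr.norm_map z).symm
      rw [hiso, EuclideanSpace.norm_eq]
      rw [Real.sq_sqrt (by positivity)]
      refine Finset.sum_congr rfl fun i _ => ?_
      rw [Real.norm_eq_abs, sq_abs]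
    rw [← hz.symm] at hnz
    rw [hnz]
    exact Finset.sum_congr rfl fun i _ => by rw [hrepr i]
  rw [hp, h1, h2]


/-- Main construction for positive dimension. -/
theorem borsuk_main (hn : 0 < n) (X : Set Epc) (hX : Bornology.IsBounded X)
    (hd : 0 < Metric.diam X) :
    ∃ Y : Fin (2 ^ (n - 1) + 1) → Set Epc,
      X = ⋃ i, Y i ∧ ∀ i, Metric.diam (Y i) < Metric.diam X := by
  classical
  set D : ℝ := Metric.diam X with hD
  set K : Set Epc := closure X with hK
  have hKb : Bornology.IsBounded K := hX.closure
  have hKc : IsCompact K := isCompact_of_isClosed_isBounded isClosed_closure hKb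
  have hne : X.Nonempty := by
    rcases X.eq_empty_or_nonempty with h | h
    · rw [h] at hD; simp [Metric.diam_empty] at hD; rw [hD] at hd; norm_num at hd
    · exact h
  have hKne : K.Nonempty := hne.closure
  have hXK : X ⊆ K := subset_closure
  have hdistK : ∀ x ∈ K, ∀ y ∈ K, dist x y ≤ D := by
    intro x hx y hy
    have h1 : dist x y ≤ Metric.diam K := Metric.dist_le_diam_of_mem hKb hx hy
    rwa [hK, Metric.diam_closure] at h1
  obtain ⟨c, r, hrball, ⟨p₀, hp₀K, hp₀c⟩, hrmin⟩ := exists_minBall K hKc hKne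
  have hr0 : 0 < r := by
    by_contra hcon
    push_neg at hcon
    have hzero : ∀ x ∈ X, ∀ y ∈ X, dist x y ≤ 0 := by
      intro x hx y hy
      calc dist x y ≤ dist x c + dist c y := dist_triangle _ _ _
      _ ≤ r + r := by
          rw [dist_comm c y]
          exact add_le_add (hrball x (hXK hx)) (hrball y (hXK hy))
      _ ≤ 0 := by linarith
    have : Metric.diam X ≤ 0 := Metric.diam_le_of_forall_dist_le le_rfl hzero
    linarith
  have hrD : 2 * r ^ 2 < D ^ 2 :=
    two_radius_sq_lt K hKc c r D hrball ⟨p₀, hp₀K, hp₀c⟩ hrmin hdistK hd hr0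
  have hDpos : (0:ℝ) < D := hd
  -- package the coordinate system as opaque data
  obtain ⟨g, coord, hPx, hPxy, hkey⟩ :
      ∃ (g : Epc → ℝ) (coord : Fin (n - 1) → Epc → ℝ),
        (∀ x : Epc, g x ^ 2 + ∑ i, coord i x ^ 2 = ‖x - c‖ ^ 2) ∧
        (∀ x y : Epc, (g x - g y) ^ 2 + ∑ i, (coord i x - coord i y) ^ 2 = ‖x - y‖ ^ 2) ∧
        (∀ y ∈ K, ‖y - c‖ ^ 2 + 2 * r * g y + r ^ 2 ≤ D ^ 2) := by
    set u : Epc := (r⁻¹ : ℝ) • (c - p₀) with hu_def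
    have hcp : ‖c - p₀‖ = r := by
      rw [← dist_eq_norm, dist_comm]
      exact hp₀c
    have hu : ‖u‖ = 1 := by
      rw [hu_def, norm_smul, hcp, Real.norm_eq_abs, abs_of_pos (by positivity)]
      field_simp
    have hru : r • u = c - p₀ := by
      rw [hu_def, smul_smul]
      rw [mul_inv_cancel₀ (ne_of_gt hr0), one_smul]
    have hune : u ≠ 0 := by
      intro h0
      rw [h0, norm_zero] at hu
      norm_num at hu
    have hrank : Module.finrank ℝ ((ℝ ∙ u)ᗮ : Submodule ℝ Epc) = n - 1 := by
      have h1 : Module.finrank ℝ (ℝ ∙ u : Submodule ℝ Epc) = 1 := finrank_span_singleton hune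
      have h2 : Module.finrank ℝ (ℝ ∙ u : Submodule ℝ Epc)
          + Module.finrank ℝ ((ℝ ∙ u)ᗮ : Submodule ℝ Epc) = Module.finrank ℝ Epc :=
        Submodule.finrank_add_finrank_orthogonal _
      have h3 : Module.finrank ℝ Epc = n := finrank_euclideanSpace_fin
      omega
    set b : OrthonormalBasis (Fin (n - 1)) ℝ ((ℝ ∙ u)ᗮ : Submodule ℝ Epc) :=
      (stdOrthonormalBasis ℝ ((ℝ ∙ u)ᗮ : Submodule ℝ Epc)).reindex (finCongr hrank) with hb
    refine ⟨fun x => ⟪u, x - c⟫, fun i x => ⟪((b i : Epc)), x - c⟫, ?_, ?_, ?_⟩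
    · intro x
      exact parseval_aux u hu b (x - c)
    · intro x y
      have h0 : x - y = (x - c) - (y - c) := by abel
      have h1 : ⟪u, x - y⟫ = ⟪u, x - c⟫ - ⟪u, y - c⟫ := by rw [h0, inner_sub_right]
      have h2 : ∀ i, ⟪((b i : Epc)), x - y⟫
          = ⟪((b i : Epc)), x - c⟫ - ⟪((b i : Epc)), y - c⟫ := by
        intro i; rw [h0, inner_sub_right]
      have h3 := parseval_aux u hu b (x - y)
      rw [h1] at h3
      rw [Finset.sum_congr rfl fun i _ => by rw [h2 i]] at h3
      exact h3
    · intro y hy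
      have h1 : dist y p₀ ≤ D := hdistK y hy p₀ hp₀K
      have h2 : y - p₀ = (y - c) + r • u := by rw [hru]; abel
      have h3 : ‖y - p₀‖ ^ 2 = ‖y - c‖ ^ 2 + 2 * ⟪y - c, r • u⟫ + ‖r • u‖ ^ 2 := by
        rw [h2]; exact norm_add_sq_real _ _
      have h4 : ⟪y - c, r • u⟫ = r * ⟪u, y - c⟫ := by
        rw [real_inner_smul_right, real_inner_comm]
      have h5 : ‖r • u‖ ^ 2 = r ^ 2 := by
        rw [norm_smul, hu, Real.norm_eq_abs, abs_of_pos hr0]; ring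
      have h6 : ‖y - p₀‖ ^ 2 ≤ D ^ 2 := by
        rw [← dist_eq_norm] at *
        nlinarith [dist_nonneg (x := y) (y := p₀)]
      rw [h3, h4, h5] at h6
      linarith
  have hgK : ∀ x ∈ K, g x ^ 2 ≤ r ^ 2 ∧ ‖x - c‖ ^ 2 ≤ r ^ 2 := by
    intro x hx
    have h1 : ‖x - c‖ ≤ r := by rw [← dist_eq_norm]; exact hrball x hx
    have h2 : ‖x - c‖ ^ 2 ≤ r ^ 2 := by nlinarith [norm_nonneg (x - c)]
    have h3 : 0 ≤ ∑ i, coord i x ^ 2 := Finset.sum_nonneg fun i _ => sq_nonneg _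
    exact ⟨by linarith [hPx x], h2⟩
  -- parameters of the decomposition
  set h : ℝ := Real.sqrt (r ^ 2 - min (r ^ 2 / 2) (D ^ 2 / 8)) with hh_def
  have hminpos : 0 < min (r ^ 2 / 2) (D ^ 2 / 8) := lt_min (by positivity) (by positivity)
  have hminle : min (r ^ 2 / 2) (D ^ 2 / 8) ≤ r ^ 2 / 2 := min_le_left _ _
  have hargpos : 0 < r ^ 2 - min (r ^ 2 / 2) (D ^ 2 / 8) := by nlinarith
  have hh2 : h ^ 2 = r ^ 2 - min (r ^ 2 / 2) (D ^ 2 / 8) := Real.sq_sqrt hargpos.le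
  have hhpos : 0 < h := Real.sqrt_pos.mpr hargpos
  have hhr : h < r := by
    have h1 : h ^ 2 < r ^ 2 := by rw [hh2]; linarith
    exact lt_of_pow_lt_pow_left₀ 2 hr0.le h1
  have hr2h2 : r ^ 2 - h ^ 2 ≤ D ^ 2 / 8 := by
    rw [hh2]; have := min_le_right (r ^ 2 / 2) (D ^ 2 / 8); linarith
  set δ : ℝ := (D ^ 2 - 2 * r ^ 2) / (8 * h) with hδ_def
  have hδ0 : 0 < δ := div_pos (by linarith) (by positivity)
  have h2hδ : 2 * h * δ = (D ^ 2 - 2 * r ^ 2) / 4 := by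
    rw [hδ_def]; field_simp; ring
  -- the pieces
  set Cap : Set Epc := {x | x ∈ X ∧ g x ≤ -h} with hCap
  set Orth : (Fin (n - 1) → Bool) → Set Epc := fun σ =>
    {x | x ∈ X ∧ -h ≤ g x ∧ ∀ i, if σ i = true then 0 ≤ coord i x else coord i x ≤ 0}
    with hOrth
  -- diameter bound for the cap
  have hBcap : ∀ x ∈ Cap, ∀ y ∈ Cap, dist x y ^ 2 ≤ 5 * D ^ 2 / 8 := by
    rintro x ⟨hxX, hgx⟩ y ⟨hyX, hgy⟩
    have hxK := hXK hxX
    have hyK := hXK hyX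
    obtain ⟨hgx2, hxc2⟩ := hgK x hxK
    obtain ⟨hgy2, hyc2⟩ := hgK y hyK
    have hsum : ∑ i, (coord i x - coord i y) ^ 2
        ≤ 2 * (∑ i, coord i x ^ 2) + 2 * (∑ i, coord i y ^ 2) := by
      rw [Finset.mul_sum, Finset.mul_sum, ← Finset.sum_add_distrib]
      exact Finset.sum_le_sum fun i _ => by nlinarith [sq_nonneg (coord i x + coord i y)]
    have hPu := hPxy x y
    have hPxx := hPx x
    have hPyy := hPx y
    have hgxr : -r ≤ g x := by nlinarith
    have hgyr : -r ≤ g y := by nlinarith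
    have hgx2h : h ^ 2 ≤ g x ^ 2 := by
      nlinarith [mul_nonneg (by linarith : (0:ℝ) ≤ -g x - h) (by linarith : (0:ℝ) ≤ -g x + h)]
    have hgy2h : h ^ 2 ≤ g y ^ 2 := by
      nlinarith [mul_nonneg (by linarith : (0:ℝ) ≤ -g y - h) (by linarith : (0:ℝ) ≤ -g y + h)]
    have hSx : ∑ i, coord i x ^ 2 ≤ r ^ 2 - h ^ 2 := by linarith
    have hSy : ∑ i, coord i y ^ 2 ≤ r ^ 2 - h ^ 2 := by linarith
    have hdiff : (g x - g y) ^ 2 ≤ r ^ 2 - h ^ 2 := by nlinarith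
    rw [dist_eq_norm]
    linarith [hPu, hsum, hr2h2]
  -- diameter bound for the orthant pieces
  have hBorth : ∀ σ : Fin (n - 1) → Bool, ∀ x ∈ Orth σ, ∀ y ∈ Orth σ,
      dist x y ^ 2 ≤ max ((6 * r ^ 2 + D ^ 2) / 4) (D ^ 2 - 2 * δ * (r - h)) := by
    have hcore : ∀ σ : Fin (n - 1) → Bool, ∀ x ∈ Orth σ, ∀ y ∈ Orth σ,
        dist x y ^ 2 ≤ ‖x - c‖ ^ 2 + ‖y - c‖ ^ 2 - 2 * g x * g y := by
      rintro σ x ⟨hxX, hgx, hsx⟩ y ⟨hyX, hgy, hsy⟩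
      have hprod : ∀ i, 0 ≤ coord i x * coord i y := by
        intro i
        have h1 := hsx i
        have h2 := hsy i
        cases hσ : σ i
        · rw [hσ] at h1 h2
          simp only [Bool.false_eq_true, if_false] at h1 h2
          nlinarith [h1, h2]
        · rw [hσ] at h1 h2
          simp only [if_true] at h1 h2
          exact mul_nonneg h1 h2
      have hsum : ∑ i, (coord i x - coord i y) ^ 2
          ≤ (∑ i, coord i x ^ 2) + (∑ i, coord i y ^ 2) := by
        rw [← Finset.sum_add_distrib]
        exact Finset.sum_le_sum fun i _ => by nlinarith [hprod i]
      have hPu := hPxy x y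
      have hPxx := hPx x
      have hPyy := hPx y
      have hexp : (g x - g y) ^ 2 = g x ^ 2 - 2 * g x * g y + g y ^ 2 := by ring
      rw [dist_eq_norm]
      linarith [hPu, hsum]
    have hfar : ∀ σ : Fin (n - 1) → Bool, ∀ x ∈ Orth σ, ∀ y ∈ Orth σ, δ ≤ g y →
        dist x y ^ 2 ≤ D ^ 2 - 2 * δ * (r - h) := by
      intro σ x hx y hy hgyδ
      have hcxy := hcore σ x hx y hy
      obtain ⟨hxX, hgx, _⟩ := hx
      obtain ⟨hyX, hgy, _⟩ := hy
      have hxK := hXK hxX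
      have hyK := hXK hyX
      obtain ⟨hgx2, hxc2⟩ := hgK x hxK
      have hky := hkey y hyK
      have hprod1 : 0 ≤ (g y - δ) * (r + g x) := by
        apply mul_nonneg (by linarith)
        nlinarith
      have hprod2 : 0 ≤ δ * (g x + h) := mul_nonneg hδ0.le (by linarith)
      nlinarith [hcxy, hky, hxc2, hprod1, hprod2]
    intro σ x hx y hy
    rcases le_or_gt (g y) δ with hgyδ | hgyδ
    · rcases le_or_gt (g x) δ with hgxδ | hgxδ
      · -- both heights small
        have hcxy := hcore σ x hx y hy
        obtain ⟨hxX, hgx, _⟩ := hx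
        obtain ⟨hyX, hgy, _⟩ := hy
        obtain ⟨hgx2, hxc2⟩ := hgK x (hXK hxX)
        obtain ⟨hgy2, hyc2⟩ := hgK y (hXK hyX)
        have hlow : -(h * δ) ≤ g x * g y := by
          rcases le_or_gt 0 (g y) with h0 | h0
          · nlinarith [mul_nonneg (by linarith : (0:ℝ) ≤ g x + h) h0,
              mul_nonneg hhpos.le (by linarith : (0:ℝ) ≤ δ - g y)]
          · nlinarith [mul_nonneg (by linarith : (0:ℝ) ≤ δ - g x) (by linarith : (0:ℝ) ≤ -(g y)),
              mul_nonneg hδ0.le (by linarith : (0:ℝ) ≤ g y + h)]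
        have : dist x y ^ 2 ≤ (6 * r ^ 2 + D ^ 2) / 4 := by
          linarith [hcxy, hxc2, hyc2, hlow, h2hδ]
        exact le_max_of_le_left this
      · -- x is high
        have := hfar σ y hy x hx hgxδ.le
        rw [dist_comm] at this
        exact le_max_of_le_right this
    · exact le_max_of_le_right (hfar σ x hx y hy hgyδ.le)
  -- global bound
  set M : ℝ := max ((6 * r ^ 2 + D ^ 2) / 4) (max (D ^ 2 - 2 * δ * (r - h)) (5 * D ^ 2 / 8))
    with hM
  have hM0 : 0 ≤ M := le_trans (by positivity) (le_max_of_le_right (le_max_right _ _))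
  have hD2 : (0:ℝ) < D ^ 2 := pow_pos hDpos 2
  have hMD : M < D ^ 2 := by
    apply max_lt
    · linarith
    · apply max_lt
      · linarith [mul_pos hδ0 (by linarith : (0:ℝ) < r - h)]
      · linarith
  have hMsqrt : Real.sqrt M < D := by
    have h1 : Real.sqrt M < Real.sqrt (D ^ 2) := Real.sqrt_lt_sqrt hM0 hMD
    rwa [Real.sqrt_sq hDpos.le] at h1
  have hdiam_piece : ∀ (S : Set Epc),
      (∀ x ∈ S, ∀ y ∈ S, dist x y ^ 2 ≤ M) → Metric.diam S < D := by
    intro S hS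
    have h1 : Metric.diam S ≤ Real.sqrt M := by
      apply Metric.diam_le_of_forall_dist_le (Real.sqrt_nonneg M)
      intro x hx y hy
      have h2 := hS x hx y hy
      calc dist x y = Real.sqrt (dist x y ^ 2) := (Real.sqrt_sq dist_nonneg).symm
      _ ≤ Real.sqrt M := Real.sqrt_le_sqrt h2
    linarith [hMsqrt]
  -- the indexed family
  have hcard : Fintype.card (Fin (n - 1) → Bool) = 2 ^ (n - 1) := by
    simp [Fintype.card_fun]
  set eB : (Fin (n - 1) → Bool) ≃ Fin (2 ^ (n - 1)) := Fintype.equivFinOfCardEq hcard with heB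
  set Y : Fin (2 ^ (n - 1) + 1) → Set Epc := fun i =>
    if hi : (i : ℕ) < 2 ^ (n - 1) then Orth (eB.symm ⟨(i : ℕ), hi⟩) else Cap with hY
  refine ⟨Y, ?_, ?_⟩
  · -- covering
    apply Set.Subset.antisymm
    · intro x hx
      rcases le_or_gt (g x) (-h) with hgx | hgx
      · -- in the cap
        refine Set.mem_iUnion.mpr ⟨⟨2 ^ (n - 1), by omega⟩, ?_⟩
        rw [hY]
        simp only
        rw [dif_neg (by simp)]
        exact ⟨hx, hgx⟩
      · -- in an orthant piece
        set σ : Fin (n - 1) → Bool := fun i => decide (0 ≤ coord i x) with hσ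
        refine Set.mem_iUnion.mpr ⟨⟨(eB σ : ℕ), by
          have := (eB σ).isLt; omega⟩, ?_⟩
        rw [hY]
        simp only
        rw [dif_pos (by simpa using (eB σ).isLt)]
        have hback : eB.symm ⟨((eB σ : Fin (2 ^ (n-1))) : ℕ), by simpa using (eB σ).isLt⟩ = σ := by
          have : (⟨((eB σ : Fin (2 ^ (n-1))) : ℕ), by simpa using (eB σ).isLt⟩ : Fin (2 ^ (n-1)))
              = eB σ := by
            apply Fin.ext
            simp
          rw [this, Equiv.symm_apply_apply]
        rw [hback]
        refine ⟨hx, le_of_lt hgx, ?_⟩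
        intro i
        by_cases hci : 0 ≤ coord i x
        · rw [hσ]; simp [hci]
        · rw [hσ]; simp [hci]; linarith [lt_of_not_ge hci]
    · intro x hx
      obtain ⟨i, hi⟩ := Set.mem_iUnion.mp hx
      rw [hY] at hi
      simp only at hi
      by_cases hii : (i : ℕ) < 2 ^ (n - 1)
      · rw [dif_pos hii] at hi
        exact hi.1
      · rw [dif_neg hii] at hi
        exact hi.1
  · -- diameters
    intro i
    rw [hY]
    simp only
    by_cases hii : (i : ℕ) < 2 ^ (n - 1)
    · rw [dif_pos hii]
      apply hdiam_piece
      intro x hx y hy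
      refine le_trans (hBorth _ x hx y hy) ?_
      rw [hM]
      apply max_le_max le_rfl (le_max_left _ _)
    · rw [dif_neg hii]
      apply hdiam_piece
      intro x hx y hy
      refine le_trans (hBcap x hx y hy) ?_
      rw [hM]
      exact le_max_of_le_right (le_max_right _ _)

end BorsukLassakAux

/-- Lassak: every bounded set X ⊆ ℝⁿ of positive diameter can be written as a union
of 2^{n−1} + 1 subsets, each of diameter strictly smaller than d(X). -/
theorem borsuk_bound_lassak (n : ℕ)
    (X : Set (EuclideanSpace ℝ (Fin n))) (hX : Bornology.IsBounded X)
    (hd : 0 < Metric.diam X) :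
    ∃ Y : Fin (2 ^ (n - 1) + 1) → Set (EuclideanSpace ℝ (Fin n)),
      X = ⋃ i, Y i ∧ ∀ i, Metric.diam (Y i) < Metric.diam X := by
  rcases Nat.eq_zero_or_pos n with hn | hn
  · exfalso
    subst hn
    have hsub : X.Subsingleton := by
      intro x hx y hy
      ext i
      exact absurd i.isLt (by omega)
    rw [Metric.diam_subsingleton hsub] at hd
    norm_num at hd
  · exact BorsukLassakAux.borsuk_main hn X hX hd
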